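/- For fixed α ∈ (0,1) and B > 0 with B ≤ z_{1−α/2}, the minimal value of L₁(λ) = (2/(1+2λ))·[λB + z_{1−α/2}√(λ² + (1+λ)²)] over λ ≥ 0 equals B + √(2z²_{1−α/2} − B²), and when B > z_{1−α/2} the minimal value is 2z_{1−α/2}. -/

import Mathlib

open MeasureTheory

/-- The standard normal CDF. -/
noncomputable def stdNormalCDF (x : ℝ) : ℝ :=
  ∫ t in Set.Iic x, (Real.sqrt (2 * Real.pi))⁻¹ * Real.exp (-t ^ 2 / 2)

/-- The minimal value of L₁ over λ ≥ 0 is B + √(2c² − B²) when B ≤ c, and 2c when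
B > c, where c = z_{1−α/2}. -/
theorem stmt_9 (α B c : ℝ) (hα : 0 < α) (hα1 : α < 1) (hB : 0 < B)
    (hc : stdNormalCDF c = 1 - α / 2) (hcpos : 0 < c)
    (L₁ : ℝ → ℝ)
    (hL₁ : ∀ lam, L₁ lam =
      2 / (1 + 2 * lam) * (lam * B + c * Real.sqrt (lam ^ 2 + (1 + lam) ^ 2))) :
    (B ≤ c → IsLeast (L₁ '' Set.Ici 0) (B + Real.sqrt (2 * c ^ 2 - B ^ 2))) ∧
    (c < B → IsLeast (L₁ '' Set.Ici 0) (2 * c)) := by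
  constructor
  · intro hBc
    set D := Real.sqrt (2 * c ^ 2 - B ^ 2) with hD
    have hDB2 : (0:ℝ) ≤ 2 * c ^ 2 - B ^ 2 := by nlinarith
    have hD2 : D ^ 2 = 2 * c ^ 2 - B ^ 2 := Real.sq_sqrt hDB2
    have hDnn : 0 ≤ D := Real.sqrt_nonneg _
    have hDgeB : B ≤ D := by nlinarith [sq_nonneg (D - B), sq_nonneg (D + B)]
    have hDpos : 0 < D := lt_of_lt_of_le hB hDgeB
    constructor
    · refine ⟨(D / B - 1) / 2, ?_, ?_⟩
      · have h1 : (1:ℝ) ≤ D / B := (one_le_div hB).2 hDgeB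
        simp only [Set.mem_Ici]; linarith
      · rw [hL₁]
        have hs : Real.sqrt (((D / B - 1) / 2) ^ 2 + (1 + (D / B - 1) / 2) ^ 2) = c / B := by
          have heq : ((D / B - 1) / 2) ^ 2 + (1 + (D / B - 1) / 2) ^ 2 = (c / B) ^ 2 := by
            field_simp
            nlinarith [hD2]
          rw [heq, Real.sqrt_sq (by positivity)]
        rw [hs]
        have key : 1 + 2 * ((D / B - 1) / 2) = D / B := by ring
        rw [key]
        field_simp
        linear_combination (-1) * hD2
    · rintro y ⟨lam, hlam, rfl⟩
      simp only [Set.mem_Ici] at hlam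
      rw [hL₁]
      set s := Real.sqrt (lam ^ 2 + (1 + lam) ^ 2) with hsdef
      have hs2 : s ^ 2 = lam ^ 2 + (1 + lam) ^ 2 := Real.sq_sqrt (by positivity)
      have hsnn : 0 ≤ s := Real.sqrt_nonneg _
      have hu : (0:ℝ) < 1 + 2 * lam := by linarith
      rw [show 2 / (1 + 2 * lam) * (lam * B + c * s) = 2 * (lam * B + c * s) / (1 + 2 * lam) by ring,
        le_div_iff₀ hu]
      nlinarith [sq_nonneg (D - B * (1 + 2 * lam)), sq_nonneg (2 * c * s - (B + (1 + 2 * lam) * D)),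
        sq_nonneg (2 * c * s + B + (1 + 2 * lam) * D), mul_nonneg hcpos.le hsnn,
        mul_nonneg hDnn hlam, mul_nonneg (mul_nonneg hcpos.le hsnn) hlam]
  · intro hBc
    constructor
    · refine ⟨0, Set.self_mem_Ici, ?_⟩
      rw [hL₁]
      norm_num
    · rintro y ⟨lam, hlam, rfl⟩
      simp only [Set.mem_Ici] at hlam
      rw [hL₁]
      set s := Real.sqrt (lam ^ 2 + (1 + lam) ^ 2) with hsdef
      have hs2 : s ^ 2 = lam ^ 2 + (1 + lam) ^ 2 := Real.sq_sqrt (by positivity)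
      have hsnn : 0 ≤ s := Real.sqrt_nonneg _
      have hsge : 1 + lam ≤ s := by nlinarith [sq_nonneg (s - (1 + lam)), sq_nonneg (s + 1 + lam)]
      have hu : (0:ℝ) < 1 + 2 * lam := by linarith
      rw [show 2 / (1 + 2 * lam) * (lam * B + c * s) = 2 * (lam * B + c * s) / (1 + 2 * lam) by ring,
        le_div_iff₀ hu]
      nlinarith [mul_nonneg hcpos.le hsnn, mul_le_mul_of_nonneg_left hsge hcpos.le,
        mul_nonneg hlam (sub_nonneg.2 hBc.le)]
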